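/- There is an absolute constant C > 0 such that the following holds. Let G = (A, B, E) be a bipartite graph with |A| = |B| = n/2 in which every vertex has degree exactly d, let Σ_A be an alphabet with |Σ_A| ≥ 2, let k ≥ 4 be an integer, let 16·log₂ n ≤ α ≤ d^{1/k}/log₂|Σ_A|, and let G_α be the random subgraph of G obtained by keeping each edge independently with probability p_α = α·log₂|Σ_A|/d. Then for all sufficiently large n, with probability greater than 2/3 the number of edges of G_α that lie on some simple cycle of length at most k in G_α is at most C·n·(α·log₂|Σ_A|)^k / d, which is at most C·n. -/

import Mathlib

open MeasureTheory SimpleGraph Finset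

section Aux

lemma path_first_edge {V : Type} {G : SimpleGraph V} {x v y : V} (r : G.Walk x v)
    (hr : r.IsPath) (he : s(x, y) ∈ r.edges) :
    ∃ (h : G.Adj x y) (r' : G.Walk y v), r = Walk.cons h r' := by
  cases r with
  | nil => simp at he
  | @cons _ w _ h₀ r₀ =>
    rw [Walk.edges_cons, List.mem_cons] at he
    rcases he with he | he
    · obtain rfl : y = w := Sym2.congr_right.mp he
      exact ⟨h₀, r₀, rfl⟩
    · exfalso
      have hx := r₀.fst_mem_support_of_mem_edges he
      rw [Walk.cons_isPath_iff] at hr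
      exact hr.2 hx

lemma cycle_decomp {V : Type} {G : SimpleGraph V} {x y : V} (c : G.Walk x x)
    (hc : c.IsCycle) (he : s(x, y) ∈ c.edges) :
    ∃ (q : G.Walk y x), q.IsPath ∧ s(x, y) ∉ q.edges ∧ q.length + 1 = c.length := by
  cases c with
  | nil => exact absurd hc Walk.IsCycle.not_of_nil
  | @cons _ v _ h₀ q₀ =>
    have hiff := (Walk.cons_isCycle_iff q₀ h₀).mp hc
    rw [Walk.edges_cons, List.mem_cons] at he
    rcases he with he | he
    · obtain rfl : y = v := Sym2.congr_right.mp he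
      exact ⟨q₀, hiff.1, hiff.2, by simp⟩
    · have hq₀p := hiff.1
      have hrev : s(x, y) ∈ q₀.reverse.edges := by
        rw [Walk.edges_reverse, List.mem_reverse]; exact he
      obtain ⟨h, r', hq⟩ := path_first_edge q₀.reverse hq₀p.reverse hrev
      have hyv : y ≠ v := by rintro rfl; exact hiff.2 he
      have hrp : (Walk.cons h r').IsPath := by rw [← hq]; exact hq₀p.reverse
      rw [Walk.cons_isPath_iff] at hrp
      refine ⟨(Walk.cons h₀ r'.reverse).reverse, ?_, ?_, ?_⟩
      · rw [Walk.isPath_reverse_iff, Walk.cons_isPath_iff]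
        exact ⟨hrp.1.reverse, by simpa using hrp.2⟩
      · rw [Walk.edges_reverse, List.mem_reverse, Walk.edges_cons, List.mem_cons]
        rintro (habs | habs)
        · exact hyv (Sym2.congr_right.mp habs)
        · rw [Walk.edges_reverse, List.mem_reverse] at habs
          have hnd : (Walk.cons h r').IsPath := by rw [← hq]; exact hq₀p.reverse
          have := hnd.edges_nodup
          rw [Walk.edges_cons, List.nodup_cons] at this
          exact this.1 habs
      · have h1 : q₀.length = r'.length + 1 := by
          rw [← Walk.length_reverse q₀, hq]; simp
        simp [Walk.length_reverse, Walk.length_cons, h1]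

lemma cycle_extract {V : Type} [DecidableEq V] {G : SimpleGraph V} {w a b : V} (c : G.Walk w w)
    (hc : c.IsCycle) (he : s(a, b) ∈ c.edges) :
    ∃ (q : G.Walk b a), q.IsPath ∧ s(a, b) ∉ q.edges ∧ q.length + 1 = c.length := by
  have ha : a ∈ c.support := c.fst_mem_support_of_mem_edges he
  have hrot := hc.rotate ha
  have he' : s(a, b) ∈ (c.rotate a ha).edges := (Walk.rotate_edges c a ha).mem_iff.mpr he
  obtain ⟨q, h1, h2, h3⟩ := cycle_decomp (c.rotate a ha) hrot he'
  have hlen : (c.rotate a ha).length = c.length := by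
    have := (Walk.rotate_darts c a ha).perm.length_eq
    simpa [Walk.length_darts] using this
  exact ⟨q, h1, h2, by omega⟩

lemma my_geom_sum_le {x : ℝ} (hx : 2 ≤ x) : ∀ K : ℕ, ∑ j ∈ Finset.range (K + 1), x ^ j ≤ 2 * x ^ K := by
  intro K
  induction K with
  | zero => simp
  | succ K ih =>
    rw [Finset.sum_range_succ]
    have hp : (0 : ℝ) ≤ x ^ K := pow_nonneg (by linarith) K
    have h1 : 2 * x ^ K ≤ x ^ (K + 1) := by rw [pow_succ]; nlinarith
    linarith

variable {V : Type} [Fintype V] [DecidableEq V] {G : SimpleGraph V} [DecidableRel G.Adj]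

set_option linter.unusedSectionVars false in
lemma adj_row_sum {d : ℕ} (hreg : G.IsRegularOfDegree d) (u : V) :
    ∑ v, G.adjMatrix ℕ u v = d := by
  simp only [adjMatrix_apply, Finset.sum_boole, Nat.cast_id]
  rw [← hreg u, degree, neighborFinset_eq_filter]

set_option linter.unusedSectionVars false in
lemma adj_pow_row_sum {d : ℕ} (hreg : G.IsRegularOfDegree d) :
    ∀ (m : ℕ) (u : V), ∑ v, (G.adjMatrix ℕ ^ m) u v = d ^ m := by
  intro m
  induction m with
  | zero => intro u; simp [Matrix.one_apply]
  | succ m ih =>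
    intro u
    rw [pow_succ']
    simp only [Matrix.mul_apply]
    rw [Finset.sum_comm]
    calc (∑ w, ∑ v, G.adjMatrix ℕ u w * (G.adjMatrix ℕ ^ m) w v)
        = ∑ w, G.adjMatrix ℕ u w * d ^ m := by
          refine Finset.sum_congr rfl fun w _ => ?_
          rw [← Finset.mul_sum, ih w]
      _ = d ^ (m + 1) := by
          rw [← Finset.sum_mul, adj_row_sum hreg u, pow_succ']

lemma walk_count_le {d : ℕ} (hreg : G.IsRegularOfDegree d) (m : ℕ) (b a : V) :
    #(G.finsetWalkLength (m + 1) b a) ≤ d ^ m := by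
  have hcard : (#(G.finsetWalkLength (m + 1) b a) : ℕ) =
      (G.adjMatrix ℕ ^ (m + 1)) b a := by
    rw [← card_set_walk_length_eq, adjMatrix_pow_apply_eq_card_walk, Nat.cast_id]
  rw [hcard, pow_succ, Matrix.mul_apply]
  calc (∑ w, (G.adjMatrix ℕ ^ m) b w * G.adjMatrix ℕ w a)
      ≤ ∑ w, (G.adjMatrix ℕ ^ m) b w * 1 := by
        refine Finset.sum_le_sum fun w _ => ?_
        refine Nat.mul_le_mul_left _ ?_
        by_cases h : G.Adj w a <;> simp [adjMatrix_apply, h]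
    _ = d ^ m := by simpa using adj_pow_row_sum hreg m b

end Aux

/-- The product Bernoulli(p) measure on subsets of a finite index type `ι`. -/
noncomputable def bernoulliProd (ι : Type) [Fintype ι] (p : ℝ) :
    Measure (ι → Bool) :=
  Measure.pi fun _ => (PMF.bernoulli (min (Real.toNNReal p) 1) (min_le_right _ _)).toMeasure

lemma bernoulliProd_cylinder {ι : Type} [Fintype ι] {p : ℝ} (hp1 : p ≤ 1)
    (T : Finset ι) :
    bernoulliProd ι p {ω | ∀ i ∈ T, ω i = true} = ENNReal.ofReal p ^ T.card := by
  classical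
  have hmin : min (Real.toNNReal p) 1 = Real.toNNReal p :=
    min_eq_left (Real.toNNReal_le_one.mpr hp1)
  have hset : {ω : ι → Bool | ∀ i ∈ T, ω i = true} =
      Set.pi Set.univ (fun i => if i ∈ T then {true} else Set.univ) := by
    ext ω
    simp only [Set.mem_pi, Set.mem_univ, forall_true_left, Set.mem_setOf_eq]
    constructor
    · intro h i; by_cases hi : i ∈ T <;> simp [hi, h i]
    · intro h i hi; have := h i; simp only [hi, if_true, Set.mem_singleton_iff] at this; exact this
  rw [bernoulliProd, hset, MeasureTheory.Measure.pi_pi]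
  have key : ∀ i : ι,
      (PMF.bernoulli (min (Real.toNNReal p) 1) (min_le_right _ _)).toMeasure
        (if i ∈ T then {true} else Set.univ) = if i ∈ T then ENNReal.ofReal p else 1 := by
    intro i
    by_cases hi : i ∈ T
    · simp only [hi, if_true]
      rw [PMF.toMeasure_apply_singleton _ _ (measurableSet_singleton _), PMF.bernoulli_apply, hmin]
      rfl
    · simp only [hi, if_false]; exact measure_univ
  rw [Finset.prod_congr rfl (fun i _ => key i), Finset.prod_ite_mem, Finset.univ_inter,
    Finset.prod_const]

instance bernoulliProd_isProb (ι : Type) [Fintype ι] (p : ℝ) :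
    IsProbabilityMeasure (bernoulliProd ι p) := by
  rw [bernoulliProd]; infer_instance

/-- The random subgraph of `G` determined by a keep-function `ω` on (potential) edges. -/
def keepG {V : Type} (G : SimpleGraph V) (ω : Sym2 V → Bool) : SimpleGraph V where
  Adj x y := G.Adj x y ∧ ω s(x, y)
  symm := ⟨fun x y ⟨h, hb⟩ => ⟨h.symm, by rwa [Sym2.eq_swap]⟩⟩
  loopless := ⟨fun x ⟨h, _⟩ => G.loopless.irrefl x h⟩

/-- there is an absolute constant `C > 0` such that, subsampling a
`d`-regular bipartite graph with `|A| = |B| = n/2` with probability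
`p_α = α·log₂|Σ_A|/d` where `16·log₂ n ≤ α ≤ d^{1/k}/log₂|Σ_A|`, for all sufficiently
large `n`, with probability greater than `2/3` the number of sampled edges lying on a
simple cycle of length at most `k` is at most `C·n·(α·log₂|Σ_A|)^k/d`, which is at most
`C·n`. -/
theorem few_bad_edges :
    ∃ C : ℝ, 0 < C ∧ ∃ N : ℕ, ∀ n : ℕ, N ≤ n →
    ∀ (A B SA : Type) [Fintype A] [Fintype B] [Fintype SA]
      [DecidableEq A] [DecidableEq B]
      (G : SimpleGraph (A ⊕ B)) (d k : ℕ) (α : ℝ),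
      2 * Fintype.card A = n → 2 * Fintype.card B = n →
      (∀ a a' : A, ¬ G.Adj (Sum.inl a) (Sum.inl a')) →
      (∀ b b' : B, ¬ G.Adj (Sum.inr b) (Sum.inr b')) →
      (∀ w : A ⊕ B, (G.neighborSet w).ncard = d) →
      2 ≤ Fintype.card SA → 4 ≤ k →
      16 * Real.logb 2 n ≤ α →
      α ≤ (d : ℝ) ^ ((1 : ℝ) / k) / Real.logb 2 (Fintype.card SA) →
      ((2 / 3 : ENNReal) <
        bernoulliProd (Sym2 (A ⊕ B)) (α * Real.logb 2 (Fintype.card SA) / d)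
          {ω | ({e ∈ (keepG G ω).edgeSet | ∃ (w : A ⊕ B) (c : (keepG G ω).Walk w w),
                  c.IsCycle ∧ c.length ≤ k ∧ e ∈ c.edges}.ncard : ℝ)
                ≤ C * n * (α * Real.logb 2 (Fintype.card SA)) ^ k / d}) ∧
      C * n * (α * Real.logb 2 (Fintype.card SA)) ^ k / d ≤ C * n := by
  refine ⟨8, by norm_num, 4, ?_⟩
  intro n hn A B SA _ _ _ _ _ G d k α hA hB hbip1 hbip2 hreg hSA hk4 hα hαd
  classical
  haveI : DecidableRel G.Adj := Classical.decRel _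
  set L : ℝ := Real.logb 2 (Fintype.card SA) with hLdef
  set x : ℝ := α * L with hxdef
  -- basic numeric facts
  have hnR : (4 : ℝ) ≤ (n : ℝ) := by exact_mod_cast hn
  have hL1 : 1 ≤ L := by
    rw [hLdef, Real.le_logb_iff_rpow_le (by norm_num) (by positivity)]
    rw [Real.rpow_one]
    exact_mod_cast hSA
  have hlogn : 2 ≤ Real.logb 2 n := by
    rw [Real.le_logb_iff_rpow_le (by norm_num) (by positivity)]
    rw [show (2:ℝ) ^ (2:ℝ) = 4 by
      rw [show (2:ℝ) = ((2:ℕ):ℝ) from by norm_num, Real.rpow_natCast]; norm_num]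
    exact hnR
  have hα32 : 32 ≤ α := by nlinarith
  have hx2 : 2 ≤ x := by rw [hxdef]; nlinarith
  have hx0 : 0 < x := by linarith
  have hL0 : 0 < L := by linarith
  have hd1 : 1 ≤ d := by
    by_contra hcon
    push_neg at hcon
    interval_cases d
    rw [Nat.cast_zero, Real.zero_rpow (by positivity), zero_div] at hαd
    linarith
  have hdR : (1 : ℝ) ≤ (d : ℝ) := by exact_mod_cast hd1
  have hd0R : (0 : ℝ) < (d : ℝ) := by linarith
  have hxdk : x ≤ (d : ℝ) ^ ((1 : ℝ) / k) := by
    rw [hxdef]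
    calc α * L ≤ ((d : ℝ) ^ ((1 : ℝ) / k) / L) * L :=
          mul_le_mul_of_nonneg_right hαd (le_of_lt hL0)
      _ = (d : ℝ) ^ ((1 : ℝ) / k) := by field_simp
  have hxk : x ^ k ≤ (d : ℝ) := by
    calc x ^ k ≤ ((d : ℝ) ^ ((1 : ℝ) / k)) ^ k := pow_le_pow_left₀ (le_of_lt hx0) hxdk k
      _ = (d : ℝ) := by
          rw [← Real.rpow_natCast ((d : ℝ) ^ ((1 : ℝ) / k)) k, ← Real.rpow_mul (by positivity)]
          rw [show (1 : ℝ) / k * k = 1 by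
            field_simp]
          exact Real.rpow_one _
  have hxd : x ≤ (d : ℝ) := by
    calc x ≤ (d : ℝ) ^ ((1 : ℝ) / k) := hxdk
      _ ≤ (d : ℝ) ^ (1 : ℝ) := by
          apply Real.rpow_le_rpow_of_exponent_le hdR
          rw [div_le_one (by positivity)]
          exact_mod_cast (by omega : 1 ≤ k)
      _ = (d : ℝ) := Real.rpow_one _
  set p : ℝ := x / (d : ℝ) with hpdef
  have hp0 : 0 ≤ p := by positivity
  have hp1 : p ≤ 1 := by rw [hpdef, div_le_one hd0R]; exact hxd
  -- graph preliminaries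
  have hregd : G.IsRegularOfDegree d := by
    intro v
    rw [degree, neighborFinset, ← Set.ncard_eq_toFinset_card']
    exact hreg v
  have hcardV : Fintype.card (A ⊕ B) = n := by rw [Fintype.card_sum]; omega
  have hE2 : 2 * #G.edgeFinset = n * d := by
    have hs := (SimpleGraph.sum_degrees_eq_twice_card_edges G).symm
    have hsum : ∑ v : A ⊕ B, G.degree v = n * d := by
      rw [Finset.sum_congr rfl (fun v _ => hregd v), Finset.sum_const, smul_eq_mul,
        Finset.card_univ, hcardV]
    omega
  -- measure preliminaries
  set μ := bernoulliProd (Sym2 (A ⊕ B)) (x / (d : ℝ)) with hμdef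
  haveI : IsProbabilityMeasure μ := bernoulliProd_isProb _ _
  set qq := ENNReal.ofReal p with hqqdef
  have hkeep_le : ∀ ω, keepG G ω ≤ G := fun ω a b h => And.left h
  have hkept : ∀ (ω : Sym2 (A ⊕ B) → Bool) (e : Sym2 (A ⊕ B)),
      e ∈ (keepG G ω).edgeSet → ω e = true := by
    intro ω e
    induction e using Sym2.ind with
    | _ a b => exact fun h => And.right ((SimpleGraph.mem_edgeSet (keepG G ω)).mp h)
  set P : Sym2 (A ⊕ B) → (Sym2 (A ⊕ B) → Bool) → Prop := fun e ω =>
    e ∈ (keepG G ω).edgeSet ∧ ∃ (w : A ⊕ B) (c : (keepG G ω).Walk w w),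
      c.IsCycle ∧ c.length ≤ k ∧ e ∈ c.edges with hPdef
  -- the per-edge bound
  have hedge : ∀ e : Sym2 (A ⊕ B),
      μ {ω | P e ω} ≤ (if e ∈ G.edgeFinset then
        ∑ m ∈ Finset.Icc 2 (k - 1), ((d ^ (m - 1) : ℕ) : ENNReal) * qq ^ (m + 1) else 0) := by
    intro e
    induction e using Sym2.ind with
    | _ a b =>
      by_cases he : s(a, b) ∈ G.edgeFinset
      · simp only [he, if_true]
        have hsub : {ω | P s(a, b) ω} ⊆
            ⋃ m ∈ Finset.Icc 2 (k - 1), ⋃ q ∈ (G.finsetWalkLength m b a).filter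
              (fun q => q.IsPath ∧ s(a, b) ∉ q.edges),
              {ω : Sym2 (A ⊕ B) → Bool | ∀ i ∈ insert s(a, b) q.edges.toFinset, ω i = true} := by
          intro ω hω
          obtain ⟨hek, w, c, hcyc, hclen, hce⟩ := hω
          obtain ⟨q0, hq0path, hq0ne, hq0len⟩ := cycle_extract c hcyc hce
          have hsubed : ∀ f ∈ q0.edges, f ∈ G.edgeSet := fun f hf =>
            SimpleGraph.edgeSet_mono (hkeep_le ω) (q0.edges_subset_edgeSet hf)
          set q := q0.transfer G hsubed with hqdef
          have hqlen : q.length = q0.length := q0.length_transfer _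
          have hqpath : q.IsPath := hq0path.transfer _
          have hqedges : q.edges = q0.edges := q0.edges_transfer _
          have h3 := hcyc.three_le_length
          refine Set.mem_iUnion₂.mpr ⟨q.length, Finset.mem_Icc.mpr ⟨by omega, by omega⟩, ?_⟩
          refine Set.mem_iUnion₂.mpr ⟨q, ?_, ?_⟩
          · rw [Finset.mem_filter]
            exact ⟨SimpleGraph.mem_finsetWalkLength_iff.mpr rfl, hqpath,
              by rw [hqedges]; exact hq0ne⟩
          · intro i hi
            rcases Finset.mem_insert.mp hi with rfl | hi'
            · exact hkept ω _ hek
            · rw [List.mem_toFinset, hqedges] at hi'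
              exact hkept ω _ (q0.edges_subset_edgeSet hi')
        refine le_trans (measure_mono hsub) ?_
        refine le_trans (measure_biUnion_finset_le _ _) ?_
        refine Finset.sum_le_sum fun m hm => ?_
        refine le_trans (measure_biUnion_finset_le _ _) ?_
        rw [Finset.mem_Icc] at hm
        have hcyl : ∀ q ∈ (G.finsetWalkLength m b a).filter
            (fun q => q.IsPath ∧ s(a, b) ∉ q.edges),
            μ {ω : Sym2 (A ⊕ B) → Bool | ∀ i ∈ insert s(a, b) q.edges.toFinset, ω i = true}
              = qq ^ (m + 1) := by
          intro q hq
          rw [Finset.mem_filter] at hq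
          obtain ⟨hqlen', hqpath', hqne'⟩ := hq
          rw [hμdef, ← hpdef, bernoulliProd_cylinder hp1, ← hqqdef]
          congr 1
          rw [Finset.card_insert_of_notMem (by rw [List.mem_toFinset]; exact hqne'),
            List.toFinset_card_of_nodup hqpath'.edges_nodup, Walk.length_edges,
            SimpleGraph.mem_finsetWalkLength_iff.mp hqlen']
        rw [Finset.sum_congr rfl hcyl, Finset.sum_const, nsmul_eq_mul]
        obtain ⟨m', rfl⟩ : ∃ m', m = m' + 1 := ⟨m - 1, by omega⟩
        simp only [Nat.add_sub_cancel]
        have hcount : #((G.finsetWalkLength (m' + 1) b a).filter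
            (fun q => q.IsPath ∧ s(a, b) ∉ q.edges)) ≤ d ^ m' :=
          le_trans (Finset.card_filter_le _ _) (walk_count_le hregd m' b a)
        exact mul_le_mul_left (by exact_mod_cast Nat.cast_le.mpr hcount) _
      · simp only [he, if_false]
        have hempty : {ω | P s(a, b) ω} = ∅ :=
          Set.eq_empty_iff_forall_notMem.mpr fun ω hω => he (by
            rw [SimpleGraph.mem_edgeFinset]
            exact SimpleGraph.edgeSet_mono (hkeep_le ω) hω.1)
        rw [hempty, measure_empty]
  -- the count of bad edges, as a Finset
  set F : (Sym2 (A ⊕ B) → Bool) → Finset (Sym2 (A ⊕ B)) :=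
    fun ω => Finset.univ.filter (fun e => P e ω) with hFdef
  set f : (Sym2 (A ⊕ B) → Bool) → ENNReal := fun ω => ((F ω).card : ENNReal) with hfdef
  -- expectation bound
  have hlint : ∫⁻ ω, f ω ∂μ ≤ (#G.edgeFinset : ENNReal) *
      ∑ m ∈ Finset.Icc 2 (k - 1), ((d ^ (m - 1) : ℕ) : ENNReal) * qq ^ (m + 1) := by
    have hfeq : ∀ ω, f ω = ∑ e : Sym2 (A ⊕ B),
        Set.indicator {ω' | P e ω'} (fun _ => (1 : ENNReal)) ω := by
      intro ω
      rw [hfdef]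
      simp only [hFdef, Finset.card_filter]
      push_cast
      refine Finset.sum_congr rfl fun e _ => ?_
      rw [Set.indicator_apply]
      by_cases h : P e ω <;> simp [h]
    calc ∫⁻ ω, f ω ∂μ = ∑ e : Sym2 (A ⊕ B), μ {ω | P e ω} := by
          rw [lintegral_congr hfeq, lintegral_finset_sum _
            (fun e _ => Measurable.of_discrete)]
          refine Finset.sum_congr rfl fun e _ => ?_
          exact lintegral_indicator_one MeasurableSet.of_discrete
      _ ≤ ∑ e : Sym2 (A ⊕ B), (if e ∈ G.edgeFinset then
            ∑ m ∈ Finset.Icc 2 (k - 1), ((d ^ (m - 1) : ℕ) : ENNReal) * qq ^ (m + 1) else 0) :=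
          Finset.sum_le_sum fun e _ => hedge e
      _ = ∑ e ∈ G.edgeFinset,
            ∑ m ∈ Finset.Icc 2 (k - 1), ((d ^ (m - 1) : ℕ) : ENNReal) * qq ^ (m + 1) := by
          rw [Finset.sum_ite_mem, Finset.univ_inter]
      _ = _ := by rw [Finset.sum_const, nsmul_eq_mul]
  -- the real bound
  set t₀ : ℝ := n * x ^ k / d with ht₀def
  have ht₀pos : 0 < t₀ := by
    apply div_pos (mul_pos (by linarith) (pow_pos hx0 k)) hd0R
  have hRle : (#G.edgeFinset : ℝ) *
      ∑ m ∈ Finset.Icc 2 (k - 1), (d : ℝ) ^ (m - 1) * p ^ (m + 1) ≤ t₀ := by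
    have hEreal : (#G.edgeFinset : ℝ) = n * d / 2 := by
      have h2 : (2 : ℝ) * (#G.edgeFinset : ℝ) = (n : ℝ) * (d : ℝ) := by exact_mod_cast hE2
      linarith
    have hterm : ∀ m ∈ Finset.Icc 2 (k - 1),
        (d : ℝ) ^ (m - 1) * p ^ (m + 1) = x ^ (m + 1) / (d : ℝ) ^ 2 := by
      intro m hm
      rw [Finset.mem_Icc] at hm
      have hd' : (d : ℝ) ≠ 0 := ne_of_gt hd0R
      rw [hpdef, div_pow, show m + 1 = (m - 1) + 2 by omega, pow_add]
      field_simp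
      rw [pow_add]
    rw [Finset.sum_congr rfl hterm, ← Finset.sum_div]
    have hsum : ∑ m ∈ Finset.Icc 2 (k - 1), x ^ (m + 1) ≤ 2 * x ^ k := by
      calc ∑ m ∈ Finset.Icc 2 (k - 1), x ^ (m + 1)
          ≤ ∑ m ∈ Finset.range k, x ^ (m + 1) := by
            apply Finset.sum_le_sum_of_subset_of_nonneg
            · intro m hm
              rw [Finset.mem_Icc] at hm
              rw [Finset.mem_range]
              omega
            · intro m _ _; positivity
        _ = (∑ m ∈ Finset.range k, x ^ m) * x := by
            rw [Finset.sum_mul]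
            exact Finset.sum_congr rfl fun m _ => (pow_succ x m)
        _ ≤ (2 * x ^ (k - 1)) * x := by
            apply mul_le_mul_of_nonneg_right _ (le_of_lt hx0)
            have := my_geom_sum_le hx2 (k - 1)
            rwa [show k - 1 + 1 = k by omega] at this
        _ = 2 * x ^ k := by rw [mul_assoc, ← pow_succ, show k - 1 + 1 = k by omega]
    calc (#G.edgeFinset : ℝ) * ((∑ m ∈ Finset.Icc 2 (k - 1), x ^ (m + 1)) / (d : ℝ) ^ 2)
        ≤ (n * d / 2) * ((2 * x ^ k) / (d : ℝ) ^ 2) := by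
          rw [hEreal]
          gcongr
      _ = t₀ := by
          rw [ht₀def]
          field_simp
  have hlint2 : ∫⁻ ω, f ω ∂μ ≤ ENNReal.ofReal t₀ := by
    refine le_trans hlint ?_
    have heq : (#G.edgeFinset : ENNReal) *
        ∑ m ∈ Finset.Icc 2 (k - 1), ((d ^ (m - 1) : ℕ) : ENNReal) * qq ^ (m + 1)
        = ENNReal.ofReal ((#G.edgeFinset : ℝ) *
            ∑ m ∈ Finset.Icc 2 (k - 1), (d : ℝ) ^ (m - 1) * p ^ (m + 1)) := by
      rw [ENNReal.ofReal_mul (by positivity)]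
      congr 1
      · rw [ENNReal.ofReal_natCast]
      · rw [ENNReal.ofReal_sum_of_nonneg (fun m _ => by positivity)]
        refine Finset.sum_congr rfl fun m _ => ?_
        rw [ENNReal.ofReal_mul (by positivity), ENNReal.ofReal_pow hp0, hqqdef]
        congr 1
        rw [show ((d : ℝ) ^ (m - 1)) = (((d ^ (m - 1) : ℕ) : ℝ)) by push_cast; ring,
          ENNReal.ofReal_natCast]
    rw [heq]
    exact ENNReal.ofReal_le_ofReal hRle
  -- identify the bad-edge set with F
  have hgoal : ∀ ω : Sym2 (A ⊕ B) → Bool,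
      {e ∈ (keepG G ω).edgeSet | ∃ (w : A ⊕ B) (c : (keepG G ω).Walk w w),
        c.IsCycle ∧ c.length ≤ k ∧ e ∈ c.edges} = ↑(F ω) := by
    intro ω
    ext e
    simp only [hFdef, Finset.coe_filter, Finset.mem_univ, true_and, Set.mem_setOf_eq, hPdef]
  have hnc : ∀ ω : Sym2 (A ⊕ B) → Bool,
      ({e ∈ (keepG G ω).edgeSet | ∃ (w : A ⊕ B) (c : (keepG G ω).Walk w w),
        c.IsCycle ∧ c.length ≤ k ∧ e ∈ c.edges}.ncard) = #(F ω) := by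
    intro ω
    rw [hgoal ω, Set.ncard_coe_finset]
  constructor
  · set S := {ω : Sym2 (A ⊕ B) → Bool |
      ((#(F ω) : ℕ) : ℝ) ≤ 8 * (n : ℝ) * x ^ k / (d : ℝ)} with hSdef
    have hkey : (2 / 3 : ENNReal) < μ S := by
      have hsub2 : Sᶜ ⊆ {ω | ENNReal.ofReal (8 * t₀) ≤ f ω} := by
        intro ω hω
        simp only [hSdef, Set.mem_compl_iff, Set.mem_setOf_eq, not_le] at hω
        have h8t : 8 * (n : ℝ) * x ^ k / (d : ℝ) = 8 * t₀ := by rw [ht₀def]; ring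
        rw [h8t] at hω
        have hle' : ENNReal.ofReal (8 * t₀) ≤ ENNReal.ofReal ((#(F ω) : ℕ) : ℝ) :=
          ENNReal.ofReal_le_ofReal (le_of_lt hω)
        rw [ENNReal.ofReal_natCast] at hle'
        exact hle'
      have hmark := mul_meas_ge_le_lintegral₀ (μ := μ) (f := f)
        (Measurable.of_discrete.aemeasurable) (ENNReal.ofReal (8 * t₀))
      set a := ENNReal.ofReal t₀ with hadef
      have ha0 : a ≠ 0 := by rw [hadef]; exact ne_of_gt (ENNReal.ofReal_pos.mpr ht₀pos)
      have hatop : a ≠ ⊤ := by rw [hadef]; exact ENNReal.ofReal_ne_top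
      have hTa : ENNReal.ofReal (8 * t₀) = 8 * a := by
        rw [hadef, ENNReal.ofReal_mul (by norm_num)]
        norm_num
      have h1 : 8 * a * μ {ω | ENNReal.ofReal (8 * t₀) ≤ f ω} ≤ a := by
        rw [← hTa]; exact le_trans hmark hlint2
      have h2 : 8 * μ Sᶜ ≤ 1 := by
        have h3 : a * (8 * μ Sᶜ) ≤ a * 1 := by
          rw [mul_one]
          calc a * (8 * μ Sᶜ) = 8 * a * μ Sᶜ := by ring
            _ ≤ 8 * a * μ {ω | ENNReal.ofReal (8 * t₀) ≤ f ω} :=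
                mul_le_mul_right (measure_mono hsub2) _
            _ ≤ a := h1
        exact (ENNReal.mul_le_mul_iff_right ha0 hatop).mp h3
      have hSc18 : μ Sᶜ ≤ 1 / 8 := by
        rw [ENNReal.le_div_iff_mul_le (Or.inl (by norm_num)) (Or.inl (by norm_num)), mul_comm]
        exact h2
      by_contra hcon
      push_neg at hcon
      have htot : μ S + μ Sᶜ = 1 := by
        rw [measure_add_measure_compl MeasurableSet.of_discrete]
        exact measure_univ
      have hle : (1 : ENNReal) ≤ 2 / 3 + 1 / 8 :=
        htot.symm.trans_le (add_le_add hcon hSc18)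
      have hlt : (2 / 3 : ENNReal) + 1 / 8 < 1 := by
        have e1 : (2 / 3 : ENNReal) = ENNReal.ofReal (2 / 3) := by
          rw [ENNReal.ofReal_div_of_pos (by norm_num)]; norm_num
        have e2 : (1 / 8 : ENNReal) = ENNReal.ofReal (1 / 8) := by
          rw [ENNReal.ofReal_div_of_pos (by norm_num)]; norm_num
        rw [e1, e2, ← ENNReal.ofReal_add (by norm_num) (by norm_num)]
        exact ENNReal.ofReal_lt_one.mpr (by norm_num)
      exact absurd (lt_of_le_of_lt hle hlt) (lt_irrefl _)
    refine lt_of_lt_of_le hkey (le_of_eq (congrArg μ ?_))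
    ext ω
    simp only [hSdef, Set.mem_setOf_eq]
    rw [hnc ω]
  · rw [div_le_iff₀ hd0R]
    have h8 : 8 * (n : ℝ) * x ^ k ≤ 8 * (n : ℝ) * (d : ℝ) :=
      mul_le_mul_of_nonneg_left hxk (by linarith)
    linarith
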